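/- Let x, y, z be complex numbers with |x| < 1/2, |y| < 1/4, x ≠ 0, y ≠ 0 and |z²| < |xy|. Then the series Φ₀(x, y, z; t) = Σ_{k,n,s≥1} G₀(k,n,s;t) x^{k−n−s} y^{n−s} z^{2(s−1)} converges uniformly on the closed disk |t| ≤ 1. -/

import Mathlib

open Complex Filter Metric Finset

attribute [local instance] Classical.propDecidable

noncomputable section

/-- Condition on the summation variables of the level-two multiple polylogarithm:
`m` is strictly increasing, `m i ≡ i+1 (mod 2)` (so `m 0` is odd, `m 1` even, ...),
and all `m i` are positive. -/
def athCond (n : ℕ) (m : Fin n → ℕ) : Prop :=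
  StrictMono m ∧ ∀ i : Fin n, m i % 2 = ((i : ℕ) + 1) % 2 ∧ 0 < m i

/-- The last entry `m n` of the summation sequence (junk value `0` for depth `0`). -/
def lastExp {n : ℕ} (m : Fin n → ℕ) : ℕ :=
  if h : 0 < n then m ⟨n - 1, Nat.sub_lt h Nat.one_pos⟩ else 0

/-- The level-two multiple polylogarithm
`Ath(𝐤; t) = Σ_{0<m₁<⋯<mₙ, mᵢ ≡ i (2)} t^{mₙ}/(m₁^{k₁}⋯mₙ^{kₙ})`, with `Ath(∅;t) = 1`. -/
def Ath {n : ℕ} (k : Fin n → ℕ) (t : ℂ) : ℂ :=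
  ∑' m : Fin n → ℕ,
    if athCond n m then t ^ lastExp m / ∏ i, ((m i : ℂ) ^ k i) else 0

/-- The multiple T-value `T(𝐤) = 2^n Σ_{0<m₁<⋯<mₙ, mᵢ ≡ i (2)} 1/(m₁^{k₁}⋯mₙ^{kₙ})`. -/
def Tval {n : ℕ} (k : Fin n → ℕ) : ℝ :=
  2 ^ n * ∑' m : Fin n → ℕ,
    if athCond n m then (∏ i, ((m i : ℝ) ^ k i))⁻¹ else 0

/-- `κ` is an index of weight `k`, depth `n` and height `s`. -/
def IdxCond (k n s : ℕ) (κ : Fin n → ℕ) : Prop :=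
  (∀ i, 1 ≤ κ i) ∧ (∑ i, κ i) = k ∧ (Finset.univ.filter fun i => 2 ≤ κ i).card = s

/-- `κ` is an admissible index of weight `k`, depth `n` and height `s`. -/
def IdxCond0 (k n s : ℕ) (κ : Fin n → ℕ) : Prop :=
  IdxCond k n s κ ∧ ∀ h : 0 < n, 2 ≤ κ ⟨n - 1, Nat.sub_lt h Nat.one_pos⟩

/-- `G(k,n,s;t) = 2^n Σ_{𝐤 ∈ I(k,n,s)} Ath(𝐤;t)`. -/
def G (k n s : ℕ) (t : ℂ) : ℂ :=
  2 ^ n * ∑' κ : Fin n → ℕ, if IdxCond k n s κ then Ath κ t else 0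

/-- `G₀(k,n,s;t) = 2^n Σ_{𝐤 ∈ I₀(k,n,s)} Ath(𝐤;t)`. -/
def G0 (k n s : ℕ) (t : ℂ) : ℂ :=
  2 ^ n * ∑' κ : Fin n → ℕ, if IdxCond0 k n s κ then Ath κ t else 0

/-- `Σ_{𝐤 ∈ I₀(k,n,s)} T(𝐤)`. -/
def sumT0 (k n s : ℕ) : ℝ :=
  ∑' κ : Fin n → ℕ, if IdxCond0 k n s κ then Tval κ else 0

/-- One term of the generating function `Φ`. -/
def PhiTerm (x y z : ℂ) (p : ℕ × ℕ × ℕ) (t : ℂ) : ℂ :=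
  if 1 ≤ p.1 ∧ 1 ≤ p.2.1 then
    G p.1 p.2.1 p.2.2 t * x ^ (p.1 - p.2.1 - p.2.2) * y ^ (p.2.1 - p.2.2) * z ^ (2 * p.2.2)
  else 0

/-- `Φ(x,y,z;t) = 1 + Σ_{k,n≥1, s≥0} G(k,n,s;t) x^{k−n−s} y^{n−s} z^{2s}`. -/
def Phi (x y z t : ℂ) : ℂ := 1 + ∑' p : ℕ × ℕ × ℕ, PhiTerm x y z p t

/-- One term of the generating function `Φ₀`. -/
def Phi0Term (x y z : ℂ) (p : ℕ × ℕ × ℕ) (t : ℂ) : ℂ :=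
  if 1 ≤ p.1 ∧ 1 ≤ p.2.1 ∧ 1 ≤ p.2.2 then
    G0 p.1 p.2.1 p.2.2 t * x ^ (p.1 - p.2.1 - p.2.2) * y ^ (p.2.1 - p.2.2)
      * z ^ (2 * (p.2.2 - 1))
  else 0

/-- `Φ₀(x,y,z;t) = Σ_{k,n,s≥1} G₀(k,n,s;t) x^{k−n−s} y^{n−s} z^{2(s−1)}`. -/
def Phi0 (x y z t : ℂ) : ℂ := ∑' p : ℕ × ℕ × ℕ, Phi0Term x y z p t

/-- The shifted factorial `(a)ₙ = a(a+1)⋯(a+n−1)`. -/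
def poch (a : ℂ) (n : ℕ) : ℂ := ∏ j ∈ Finset.range n, (a + j)

/-- The Gauss hypergeometric series `F(a,b,c;t)`. -/
def hypF (a b c t : ℂ) : ℂ :=
  ∑' n : ℕ, poch a n * poch b n / ((n.factorial : ℂ) * poch c n) * t ^ n
open scoped ENNReal NNReal

namespace Phi0Aux

lemma norm_tsum_le' {ι : Type*} (f : ι → ℂ) : ‖∑' i, f i‖ ≤ ∑' i, ‖f i‖ := by
  by_cases h : Summable f
  · exact norm_tsum_le_tsum_norm (summable_norm_iff.mpr h)
  · rw [tsum_eq_zero_of_not_summable h,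
      tsum_eq_zero_of_not_summable (fun hs => h (summable_norm_iff.mp hs))]
    simp

lemma prod_ite_zero {ι : Type*} [Fintype ι] (P : ι → Prop) (a : ι → ℝ≥0∞) :
    (∏ i, if P i then a i else 0) = if (∀ i, P i) then ∏ i, a i else 0 := by
  by_cases h : ∀ i, P i
  · rw [if_pos h]; exact Finset.prod_congr rfl fun i _ => if_pos (h i)
  · rw [if_neg h]
    push_neg at h
    obtain ⟨i, hi⟩ := h
    exact Finset.prod_eq_zero (Finset.mem_univ i) (by simp [hi])

lemma tsum_pi_prod : ∀ (n : ℕ) (f : Fin n → ℕ → ℝ≥0∞),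
    ∑' κ : Fin n → ℕ, ∏ i, f i (κ i) = ∏ i, ∑' c, f i c := by
  intro n
  induction n with
  | zero =>
    intro f
    haveI : Subsingleton (Fin 0 → ℕ) := ⟨fun a b => funext fun i => i.elim0⟩
    rw [tsum_eq_single (fun i => i.elim0) (fun b hb => (hb (Subsingleton.elim _ _)).elim)]
    simp
  | succ n ih =>
    intro f
    rw [← (Fin.consEquiv fun _ : Fin (n+1) => ℕ).tsum_eq (f := fun κ : Fin (n+1) → ℕ => ∏ i, f i (κ i))]
    calc ∑' p : ℕ × (Fin n → ℕ), ∏ i, f i ((Fin.consEquiv fun _ : Fin (n+1) => ℕ) p i)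
        = ∑' (c : ℕ) (rest : Fin n → ℕ), f 0 c * ∏ i : Fin n, f i.succ (rest i) := by
          rw [ENNReal.tsum_prod']
          exact tsum_congr fun c => tsum_congr fun rest => by
            rw [Fin.prod_univ_succ]; simp
      _ = (∑' c, f 0 c) * ∏ i : Fin n, ∑' c, f i.succ c := by
          rw [← ih fun i => f i.succ]
          rw [← ENNReal.tsum_mul_right]
          exact tsum_congr fun c => ENNReal.tsum_mul_left
      _ = ∏ i, ∑' c, f i c := by rw [Fin.prod_univ_succ]

lemma bin : ∀ (r : ℕ) (a d : ℝ), 0 ≤ a → 0 ≤ d →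
    a ^ (r+1) + ((r:ℝ)+1) * a ^ r * d ≤ (a + d) ^ (r+1) := by
  intro r
  induction r with
  | zero => intro a d _ _; simp
  | succ r ih =>
    intro a d ha hd
    have h1 := ih a d ha hd
    have h2 : (0:ℝ) ≤ a + d := by linarith
    have e1 : a ^ (r+1) = a ^ r * a := pow_succ a r
    have e2 : a ^ (r+2) = a ^ (r+1) * a := pow_succ a (r+1)
    have key : a ^ (r+2) + ((r:ℝ)+1+1) * a ^ (r+1) * d
        ≤ (a ^ (r+1) + ((r:ℝ)+1) * a ^ r * d) * (a + d) := by
      have hc : (0:ℝ) ≤ ((r:ℝ)+1) * a ^ r * d * d := by positivity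
      calc a ^ (r+2) + ((r:ℝ)+1+1) * a ^ (r+1) * d
          ≤ a ^ (r+2) + ((r:ℝ)+1+1) * a ^ (r+1) * d + ((r:ℝ)+1) * a ^ r * d * d := by
            linarith
        _ = (a ^ (r+1) + ((r:ℝ)+1) * a ^ r * d) * (a + d) := by rw [e2, e1]; ring
    have h3 : (a ^ (r+1) + ((r:ℝ)+1) * a ^ r * d) * (a + d) ≤ (a+d)^(r+1) * (a+d) :=
      mul_le_mul_of_nonneg_right h1 h2
    have h4 : (a+d)^(r+1) * (a+d) = (a+d)^(r+2) := (pow_succ _ _).symm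
    push_cast
    linarith

end Phi0Aux
namespace Phi0Aux

/-- real harmonic number -/
def H (M : ℕ) : ℝ := (harmonic M : ℝ)

lemma H_nonneg (M : ℕ) : 0 ≤ H M := by
  have : 0 ≤ harmonic M := by
    induction M with
    | zero => simp
    | succ M ih => rw [harmonic_succ]; positivity
  unfold H
  exact_mod_cast this

lemma H_succ (M : ℕ) : H (M+1) = H M + ((M:ℝ)+1)⁻¹ := by
  unfold H
  rw [harmonic_succ]
  push_cast
  ring

lemma telescope (r : ℕ) : ∀ M : ℕ,
    ∑ L ∈ Finset.Icc 1 M, ((L:ℝ))⁻¹ * H (L-1) ^ r ≤ H M ^ (r+1) / ((r:ℝ)+1) := by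
  intro M
  induction M with
  | zero =>
    rw [show Finset.Icc 1 0 = ∅ from Finset.Icc_eq_empty (by omega)]
    simp [H, zero_pow (Nat.succ_ne_zero r)]
  | succ M ihM =>
    rw [Finset.sum_Icc_succ_top (by omega : 1 ≤ M + 1)]
    have hc : (0:ℝ) < (r:ℝ) + 1 := by positivity
    set d : ℝ := ((M:ℝ)+1)⁻¹ with hd
    have hd0 : 0 ≤ d := by positivity
    have hb := bin r (H M) d (H_nonneg M) hd0
    have heq : H (M+1) = H M + d := H_succ M
    have hterm : ((M+1:ℕ):ℝ)⁻¹ * H ((M+1)-1) ^ r = d * H M ^ r := by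
      push_cast
      norm_num
      exact Or.inl hd.symm
    rw [hterm]
    have key : (H M ^ (r+1) + ((r:ℝ)+1) * H M ^ r * d) / ((r:ℝ)+1)
        ≤ (H M + d) ^ (r+1) / ((r:ℝ)+1) := by gcongr
    have lhs_eq : (H M ^ (r+1) + ((r:ℝ)+1) * H M ^ r * d) / ((r:ℝ)+1)
        = H M ^ (r+1) / ((r:ℝ)+1) + d * H M ^ r := by
      field_simp
    rw [lhs_eq] at key
    rw [heq]
    linarith

lemma snoc_cond {r : ℕ} {rest : Fin r → ℕ} {L : ℕ}
    (h : StrictMono (Fin.snoc rest L : Fin (r+1) → ℕ)) :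
    StrictMono rest ∧ ∀ i, rest i < L := by
  constructor
  · intro a b hab
    have := h (Fin.castSucc_lt_castSucc_iff.mpr hab)
    simpa [Fin.snoc_castSucc] using this
  · intro i
    have := h (Fin.castSucc_lt_last i)
    simpa [Fin.snoc_castSucc, Fin.snoc_last] using this

/-- sum over strictly increasing positive tuples bounded by M of prod of inverses -/
def QQ (r M : ℕ) : ℝ≥0∞ := ∑' m : Fin r → ℕ,
  if StrictMono m ∧ ∀ i, 0 < m i ∧ m i ≤ M then ∏ i, ((m i : ℝ≥0∞))⁻¹ else 0

lemma peel_point {r M : ℕ} (L : ℕ) (rest : Fin r → ℕ) :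
    (if StrictMono (Fin.snoc rest L : Fin (r+1) → ℕ) ∧
        (∀ i, 0 < (Fin.snoc rest L : Fin (r+1) → ℕ) i ∧
          (Fin.snoc rest L : Fin (r+1) → ℕ) i ≤ M)
      then ∏ i, (((Fin.snoc rest L : Fin (r+1) → ℕ) i : ℝ≥0∞))⁻¹ else 0)
    ≤ (if 1 ≤ L ∧ L ≤ M then ((L:ℝ≥0∞))⁻¹ *
        (if StrictMono rest ∧ ∀ i, 0 < rest i ∧ rest i ≤ L - 1
          then ∏ i, ((rest i:ℝ≥0∞))⁻¹ else 0) else 0) := by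
  by_cases h : StrictMono (Fin.snoc rest L : Fin (r+1) → ℕ) ∧
      (∀ i, 0 < (Fin.snoc rest L : Fin (r+1) → ℕ) i ∧
        (Fin.snoc rest L : Fin (r+1) → ℕ) i ≤ M)
  · have hrest := snoc_cond h.1
    have hLlast := h.2 (Fin.last r)
    simp only [Fin.snoc_last] at hLlast
    have hL : 1 ≤ L ∧ L ≤ M := ⟨hLlast.1, hLlast.2⟩
    have hc : StrictMono rest ∧ ∀ i, 0 < rest i ∧ rest i ≤ L - 1 :=
      ⟨hrest.1, fun i => ⟨by simpa [Fin.snoc_castSucc] using (h.2 i.castSucc).1,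
        by have := hrest.2 i; omega⟩⟩
    rw [if_pos h, if_pos hL, if_pos hc]
    apply le_of_eq
    rw [Fin.prod_univ_castSucc]
    simp only [Fin.snoc_castSucc, Fin.snoc_last]
    ring
  · rw [if_neg h]
    exact zero_le

lemma Qbound : ∀ (r M : ℕ), QQ r M ≤ ENNReal.ofReal (H M ^ r / r.factorial) := by
  intro r
  induction r with
  | zero =>
    intro M
    unfold QQ
    haveI : Subsingleton (Fin 0 → ℕ) := ⟨fun a b => funext fun i => i.elim0⟩
    rw [tsum_eq_single (fun i => i.elim0) (fun b hb => (hb (Subsingleton.elim _ _)).elim)]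
    rw [if_pos ⟨fun a _ _ => a.elim0, fun i => i.elim0⟩]
    simp
  | succ r ih =>
    intro M
    unfold QQ
    rw [← (Fin.snocEquiv (fun _ : Fin (r+1) => ℕ)).tsum_eq]
    rw [ENNReal.tsum_prod']
    calc ∑' (L : ℕ) (rest : Fin r → ℕ),
          (if StrictMono (Fin.snocEquiv (fun _ : Fin (r+1) => ℕ) (L, rest)) ∧
              ∀ i, 0 < Fin.snocEquiv (fun _ : Fin (r+1) => ℕ) (L, rest) i ∧
                Fin.snocEquiv (fun _ : Fin (r+1) => ℕ) (L, rest) i ≤ M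
            then ∏ i, ((Fin.snocEquiv (fun _ : Fin (r+1) => ℕ) (L, rest) i : ℝ≥0∞))⁻¹ else 0)
        ≤ ∑' (L : ℕ) (rest : Fin r → ℕ),
          (if 1 ≤ L ∧ L ≤ M then ((L:ℝ≥0∞))⁻¹ *
            (if StrictMono rest ∧ ∀ i, 0 < rest i ∧ rest i ≤ L - 1
              then ∏ i, ((rest i:ℝ≥0∞))⁻¹ else 0) else 0) := by
          refine ENNReal.tsum_le_tsum fun L => ENNReal.tsum_le_tsum fun rest => ?_
          have : Fin.snocEquiv (fun _ : Fin (r+1) => ℕ) (L, rest)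
              = (Fin.snoc rest L : Fin (r+1) → ℕ) := by
            funext i; simp [Fin.snocEquiv]
          rw [this]
          exact peel_point L rest
      _ = ∑' L : ℕ, (if 1 ≤ L ∧ L ≤ M then ((L:ℝ≥0∞))⁻¹ * QQ r (L-1) else 0) := by
          refine tsum_congr fun L => ?_
          by_cases hL : 1 ≤ L ∧ L ≤ M
          · rw [if_pos hL]
            have hcg : ∀ rest : Fin r → ℕ,
                (if 1 ≤ L ∧ L ≤ M then ((L:ℝ≥0∞))⁻¹ *
                  (if StrictMono rest ∧ ∀ i, 0 < rest i ∧ rest i ≤ L - 1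
                    then ∏ i, ((rest i:ℝ≥0∞))⁻¹ else 0) else 0)
                = ((L:ℝ≥0∞))⁻¹ *
                  (if StrictMono rest ∧ ∀ i, 0 < rest i ∧ rest i ≤ L - 1
                    then ∏ i, ((rest i:ℝ≥0∞))⁻¹ else 0) := fun rest => if_pos hL
            rw [tsum_congr hcg, ENNReal.tsum_mul_left]
            rfl
          · simp [if_neg hL]
      _ ≤ ∑' L : ℕ, (if 1 ≤ L ∧ L ≤ M
            then ENNReal.ofReal ((L:ℝ)⁻¹ * (H (L-1) ^ r / r.factorial)) else 0) := by
          refine ENNReal.tsum_le_tsum fun L => ?_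
          by_cases hL : 1 ≤ L ∧ L ≤ M
          · have hpos : (0:ℝ) < (L:ℝ) := by exact_mod_cast hL.1
            rw [if_pos hL, if_pos hL,
              ENNReal.ofReal_mul (p := (L:ℝ)⁻¹) (by positivity)]
            have hcast : ENNReal.ofReal ((L:ℝ)⁻¹) = ((L:ℝ≥0∞))⁻¹ := by
              rw [ENNReal.ofReal_inv_of_pos hpos, ENNReal.ofReal_natCast]
            rw [hcast]
            exact mul_le_mul_right (ih (L-1)) _
          · simp [if_neg hL]
      _ = ∑ L ∈ Finset.Icc 1 M,
            ENNReal.ofReal ((L:ℝ)⁻¹ * (H (L-1) ^ r / r.factorial)) := by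
          rw [tsum_eq_sum (s := Finset.Icc 1 M)
            (fun L hL => if_neg (by simpa [Finset.mem_Icc] using hL))]
          exact Finset.sum_congr rfl fun L hL =>
            if_pos (by simpa [Finset.mem_Icc] using hL)
      _ ≤ ENNReal.ofReal (H M ^ (r+1) / (r+1).factorial) := by
          rw [← ENNReal.ofReal_sum_of_nonneg (fun L _ => mul_nonneg (by positivity)
            (div_nonneg (pow_nonneg (H_nonneg _) _) (by positivity)))]
          apply ENNReal.ofReal_le_ofReal
          have := telescope r M
          have heq : ∑ L ∈ Finset.Icc 1 M, (L:ℝ)⁻¹ * (H (L-1) ^ r / r.factorial)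
              = (∑ L ∈ Finset.Icc 1 M, (L:ℝ)⁻¹ * H (L-1) ^ r) / r.factorial := by
            rw [Finset.sum_div]
            exact Finset.sum_congr rfl fun L _ => by ring
          rw [heq]
          have hfac : (0:ℝ) < r.factorial := by exact_mod_cast r.factorial_pos
          calc (∑ L ∈ Finset.Icc 1 M, (L:ℝ)⁻¹ * H (L-1) ^ r) / r.factorial
              ≤ (H M ^ (r+1) / ((r:ℝ)+1)) / r.factorial := by gcongr
            _ = H M ^ (r+1) / (r+1).factorial := by
                rw [Nat.factorial_succ]
                push_cast
                rw [div_div]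

end Phi0Aux
namespace Phi0Aux

section geo
variable {X : ℝ≥0∞}

lemma inv_fac (hX : X ≤ 1/2) {m : ℕ} (hm : 1 ≤ m) :
    (1 - X * ((m:ℝ≥0∞))⁻¹)⁻¹ ≤ 2 := by
  have hm1 : ((m:ℝ≥0∞))⁻¹ ≤ 1 := by
    rw [ENNReal.inv_le_one]
    exact_mod_cast hm
  have hXm : X * ((m:ℝ≥0∞))⁻¹ ≤ 1/2 := by
    calc X * ((m:ℝ≥0∞))⁻¹ ≤ (1/2) * 1 := mul_le_mul' hX hm1
      _ = 1/2 := mul_one _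
  have h2 : (1:ℝ≥0∞)/2 ≤ 1 - X * ((m:ℝ≥0∞))⁻¹ := by
    have := tsub_le_tsub_left hXm (1:ℝ≥0∞)
    rwa [ENNReal.sub_half ENNReal.one_ne_top] at this
  calc (1 - X * ((m:ℝ≥0∞))⁻¹)⁻¹ ≤ ((1:ℝ≥0∞)/2)⁻¹ := ENNReal.inv_le_inv' h2
    _ = 2 := by rw [one_div, inv_inv]

lemma m_ne_zero {m : ℕ} (hm : 1 ≤ m) : ((m:ℝ≥0∞)) ≠ 0 := by
  rw [Ne, Nat.cast_eq_zero]
  omega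

lemma pow_inv_succ {m : ℕ} (hm : 1 ≤ m) (j : ℕ) :
    (((m:ℝ≥0∞)) ^ (j+1))⁻¹ = (((m:ℝ≥0∞))⁻¹) ^ j * ((m:ℝ≥0∞))⁻¹ := by
  rw [pow_succ, ENNReal.mul_inv (Or.inl (pow_ne_zero _ (m_ne_zero hm)))
    (Or.inl (ENNReal.pow_ne_top (ENNReal.natCast_ne_top m))), ENNReal.inv_pow]

lemma geo1 (hX : X ≤ 1/2) {m : ℕ} (hm : 1 ≤ m) :
    (∑' c : ℕ, if 1 ≤ c then X ^ (c-1) * (((m:ℝ≥0∞)) ^ c)⁻¹ else 0)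
      ≤ 2 * ((m:ℝ≥0∞))⁻¹ := by
  have hinj : Function.Injective (fun j : ℕ => j + 1) := fun a b h => by
    simpa using h
  rw [← Function.Injective.tsum_eq hinj (f := fun c : ℕ =>
      if 1 ≤ c then X ^ (c-1) * (((m:ℝ≥0∞)) ^ c)⁻¹ else 0)
    (by
      intro c hc
      simp only [Function.mem_support] at hc
      have h1 : 1 ≤ c := by
        by_contra h
        exact hc (if_neg h)
      exact ⟨c - 1, by show c - 1 + 1 = c; omega⟩)]
  have hcg : ∀ j : ℕ, (if 1 ≤ j + 1 then X ^ (j+1-1) * (((m:ℝ≥0∞)) ^ (j+1))⁻¹ else 0)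
      = ((m:ℝ≥0∞))⁻¹ * (X * ((m:ℝ≥0∞))⁻¹) ^ j := by
    intro j
    rw [if_pos (by omega), Nat.add_sub_cancel, pow_inv_succ hm, mul_pow]
    ring
  rw [tsum_congr hcg, ENNReal.tsum_mul_left, ENNReal.tsum_geometric]
  calc ((m:ℝ≥0∞))⁻¹ * (1 - X * ((m:ℝ≥0∞))⁻¹)⁻¹ ≤ ((m:ℝ≥0∞))⁻¹ * 2 :=
        mul_le_mul_right (inv_fac hX hm) _
    _ = 2 * ((m:ℝ≥0∞))⁻¹ := mul_comm _ _

lemma geo2 (hX : X ≤ 1/2) {m : ℕ} (hm : 1 ≤ m) :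
    (∑' c : ℕ, if 2 ≤ c then X ^ (c-1) * (((m:ℝ≥0∞)) ^ c)⁻¹ else 0)
      ≤ ((m:ℝ≥0∞))⁻¹ * ((m:ℝ≥0∞))⁻¹ := by
  have hinj : Function.Injective (fun j : ℕ => j + 2) := fun a b h => by
    simpa using h
  rw [← Function.Injective.tsum_eq hinj (f := fun c : ℕ =>
      if 2 ≤ c then X ^ (c-1) * (((m:ℝ≥0∞)) ^ c)⁻¹ else 0)
    (by
      intro c hc
      simp only [Function.mem_support] at hc
      have h2 : 2 ≤ c := by
        by_contra h
        exact hc (if_neg h)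
      exact ⟨c - 2, by show c - 2 + 2 = c; omega⟩)]
  have hcg : ∀ j : ℕ, (if 2 ≤ j + 2 then X ^ (j+2-1) * (((m:ℝ≥0∞)) ^ (j+2))⁻¹ else 0)
      = (((m:ℝ≥0∞))⁻¹ * ((m:ℝ≥0∞))⁻¹) * (X * (X * ((m:ℝ≥0∞))⁻¹) ^ j) := by
    intro j
    rw [if_pos (by omega)]
    have e1 : j + 2 - 1 = j + 1 := by omega
    have e2 : j + 2 = (j + 1) + 1 := by omega
    rw [e1, e2, pow_inv_succ hm, mul_pow]
    ring
  rw [tsum_congr hcg, ENNReal.tsum_mul_left, ENNReal.tsum_mul_left, ENNReal.tsum_geometric]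
  have hfac : X * (1 - X * ((m:ℝ≥0∞))⁻¹)⁻¹ ≤ 1 := by
    calc X * (1 - X * ((m:ℝ≥0∞))⁻¹)⁻¹ ≤ (1/2) * 2 := mul_le_mul' hX (inv_fac hX hm)
      _ = 1 := by
        rw [one_div, ENNReal.inv_mul_cancel (by norm_num) (by norm_num)]
  exact mul_le_of_le_one_right' hfac

/-- per-coordinate weight -/
def WW (X : ℝ≥0∞) (c m : ℕ) : ℝ≥0∞ := X ^ (c-1) * (((m:ℝ≥0∞)) ^ c)⁻¹

lemma kappa_sum (hX : X ≤ 1/2) {n : ℕ} (hn : 0 < n) (m : Fin n → ℕ) (hm : ∀ i, 1 ≤ m i) :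
    (∑' κ : Fin n → ℕ, if ((∀ i, 1 ≤ κ i) ∧ 2 ≤ κ ⟨n-1, Nat.sub_lt hn Nat.one_pos⟩)
        then ∏ i, WW X (κ i) (m i) else 0)
      ≤ 2^n * (∏ i, ((m i : ℝ≥0∞))⁻¹) * ((m ⟨n-1, Nat.sub_lt hn Nat.one_pos⟩ : ℝ≥0∞))⁻¹ := by
  set L : Fin n := ⟨n-1, Nat.sub_lt hn Nat.one_pos⟩
  have hcondiff : ∀ κ : Fin n → ℕ,
      ((∀ i, 1 ≤ κ i) ∧ 2 ≤ κ L) ↔ (∀ i, 1 ≤ κ i ∧ (i = L → 2 ≤ κ i)) := by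
    intro κ
    constructor
    · rintro ⟨h1, h2⟩ i
      exact ⟨h1 i, fun hi => hi ▸ h2⟩
    · intro h
      exact ⟨fun i => (h i).1, (h L).2 rfl⟩
  have hcg : ∀ κ : Fin n → ℕ,
      (if ((∀ i, 1 ≤ κ i) ∧ 2 ≤ κ L) then ∏ i, WW X (κ i) (m i) else 0)
      = ∏ i, (if (1 ≤ κ i ∧ (i = L → 2 ≤ κ i)) then WW X (κ i) (m i) else 0) := by
    intro κ
    by_cases h : (∀ i, 1 ≤ κ i) ∧ 2 ≤ κ L
    · rw [if_pos h]
      exact (Finset.prod_congr rfl fun i _ => (if_pos (((hcondiff κ).mp h) i))).symm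
    · rw [if_neg h]
      have h2 : ¬ ∀ i, (1 ≤ κ i ∧ (i = L → 2 ≤ κ i)) := fun hh => h ((hcondiff κ).mpr hh)
      obtain ⟨i, hi⟩ := not_forall.mp h2
      exact (Finset.prod_eq_zero (Finset.mem_univ i)
        (show (if 1 ≤ κ i ∧ (i = L → 2 ≤ κ i) then WW X (κ i) (m i) else 0) = 0
          from if_neg hi)).symm
  rw [tsum_congr hcg, tsum_pi_prod n
    (fun i c => if (1 ≤ c ∧ (i = L → 2 ≤ c)) then WW X c (m i) else 0)]
  have key : ∀ i : Fin n,
      (∑' c : ℕ, if (1 ≤ c ∧ (i = L → 2 ≤ c)) then WW X c (m i) else 0)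
      ≤ 2 * ((m i : ℝ≥0∞))⁻¹ * (if i = L then ((m i : ℝ≥0∞))⁻¹ else 1) := by
    intro i
    by_cases hi : i = L
    · have hc : ∀ c : ℕ, (1 ≤ c ∧ (i = L → 2 ≤ c)) ↔ 2 ≤ c := by
        intro c
        constructor
        · exact fun h => h.2 hi
        · exact fun h => ⟨by omega, fun _ => h⟩
      have hcg2 : ∀ c : ℕ, (if (1 ≤ c ∧ (i = L → 2 ≤ c)) then WW X c (m i) else 0)
          = (if 2 ≤ c then X ^ (c-1) * (((m i:ℝ≥0∞)) ^ c)⁻¹ else 0) := by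
        intro c
        rw [if_congr (hc c) rfl rfl]
        rfl
      rw [tsum_congr hcg2, if_pos hi]
      calc (∑' c : ℕ, if 2 ≤ c then X ^ (c-1) * (((m i:ℝ≥0∞)) ^ c)⁻¹ else 0)
          ≤ ((m i:ℝ≥0∞))⁻¹ * ((m i:ℝ≥0∞))⁻¹ := geo2 hX (hm i)
        _ ≤ 2 * ((m i:ℝ≥0∞))⁻¹ * ((m i:ℝ≥0∞))⁻¹ := by
            apply mul_le_mul_left
            apply le_mul_of_one_le_left' (by norm_num)
    · have hc : ∀ c : ℕ, (1 ≤ c ∧ (i = L → 2 ≤ c)) ↔ 1 ≤ c := by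
        intro c
        constructor
        · exact fun h => h.1
        · exact fun h => ⟨h, fun hh => absurd hh hi⟩
      have hcg2 : ∀ c : ℕ, (if (1 ≤ c ∧ (i = L → 2 ≤ c)) then WW X c (m i) else 0)
          = (if 1 ≤ c then X ^ (c-1) * (((m i:ℝ≥0∞)) ^ c)⁻¹ else 0) := by
        intro c
        rw [if_congr (hc c) rfl rfl]
        rfl
      rw [tsum_congr hcg2, if_neg hi, mul_one]
      exact geo1 hX (hm i)
  calc (∏ i, ∑' c : ℕ, if (1 ≤ c ∧ (i = L → 2 ≤ c)) then WW X c (m i) else 0)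
      ≤ ∏ i, (2 * ((m i : ℝ≥0∞))⁻¹ * (if i = L then ((m i : ℝ≥0∞))⁻¹ else 1)) :=
        Finset.prod_le_prod' fun i _ => key i
    _ = 2^n * (∏ i, ((m i : ℝ≥0∞))⁻¹) * ((m L : ℝ≥0∞))⁻¹ := by
        rw [Finset.prod_mul_distrib, Finset.prod_mul_distrib]
        congr 1
        · congr 1
          rw [Finset.prod_const]
          congr 1
          simp
        · rw [Finset.prod_ite_eq' Finset.univ L (fun i => ((m i : ℝ≥0∞))⁻¹)]
          simp

end geo
end Phi0Aux
namespace Phi0Aux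

/-- majorant of the inner m-sum -/
def MS (N : ℕ) : ℝ≥0∞ := ∑' L : ℕ,
  if 1 ≤ L then ((L:ℝ≥0∞))⁻¹ * ((L:ℝ≥0∞))⁻¹ * ENNReal.ofReal (H (L-1) ^ N / N.factorial)
  else 0

lemma peel_point2 {N : ℕ} (L : ℕ) (rest : Fin N → ℕ) :
    (if StrictMono (Fin.snoc rest L : Fin (N+1) → ℕ) ∧
        (∀ i, 0 < (Fin.snoc rest L : Fin (N+1) → ℕ) i)
      then (∏ i, (((Fin.snoc rest L : Fin (N+1) → ℕ) i : ℝ≥0∞))⁻¹) *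
        (((Fin.snoc rest L : Fin (N+1) → ℕ) (Fin.last N) : ℝ≥0∞))⁻¹ else 0)
    ≤ (if 1 ≤ L then (((L:ℝ≥0∞))⁻¹ * ((L:ℝ≥0∞))⁻¹) *
        (if StrictMono rest ∧ ∀ i, 0 < rest i ∧ rest i ≤ L - 1
          then ∏ i, ((rest i:ℝ≥0∞))⁻¹ else 0) else 0) := by
  by_cases h : StrictMono (Fin.snoc rest L : Fin (N+1) → ℕ) ∧
      (∀ i, 0 < (Fin.snoc rest L : Fin (N+1) → ℕ) i)
  · have hrest := snoc_cond h.1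
    have hLlast := h.2 (Fin.last N)
    simp only [Fin.snoc_last] at hLlast
    have hL : 1 ≤ L := hLlast
    have hc : StrictMono rest ∧ ∀ i, 0 < rest i ∧ rest i ≤ L - 1 :=
      ⟨hrest.1, fun i => ⟨by simpa [Fin.snoc_castSucc] using (h.2 i.castSucc),
        by have := hrest.2 i; omega⟩⟩
    rw [if_pos h, if_pos hL, if_pos hc]
    apply le_of_eq
    rw [Fin.prod_univ_castSucc]
    simp only [Fin.snoc_castSucc, Fin.snoc_last]
    ring
  · rw [if_neg h]
    exact zero_le

lemma m_sum_bound (N : ℕ) :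
    (∑' m : Fin (N+1) → ℕ, if StrictMono m ∧ ∀ i, 0 < m i
        then (∏ i, ((m i : ℝ≥0∞))⁻¹) * ((m (Fin.last N) : ℝ≥0∞))⁻¹ else 0)
      ≤ MS N := by
  rw [← (Fin.snocEquiv (fun _ : Fin (N+1) => ℕ)).tsum_eq, ENNReal.tsum_prod']
  unfold MS
  refine ENNReal.tsum_le_tsum fun L => ?_
  have step1 : ∀ rest : Fin N → ℕ,
      (if StrictMono (Fin.snocEquiv (fun _ : Fin (N+1) => ℕ) (L, rest)) ∧
          (∀ i, 0 < Fin.snocEquiv (fun _ : Fin (N+1) => ℕ) (L, rest) i)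
        then (∏ i, ((Fin.snocEquiv (fun _ : Fin (N+1) => ℕ) (L, rest) i : ℝ≥0∞))⁻¹) *
          ((Fin.snocEquiv (fun _ : Fin (N+1) => ℕ) (L, rest) (Fin.last N) : ℝ≥0∞))⁻¹ else 0)
      ≤ (if 1 ≤ L then (((L:ℝ≥0∞))⁻¹ * ((L:ℝ≥0∞))⁻¹) *
          (if StrictMono rest ∧ ∀ i, 0 < rest i ∧ rest i ≤ L - 1
            then ∏ i, ((rest i:ℝ≥0∞))⁻¹ else 0) else 0) := by
    intro rest
    have he : Fin.snocEquiv (fun _ : Fin (N+1) => ℕ) (L, rest)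
        = (Fin.snoc rest L : Fin (N+1) → ℕ) := by
      funext i; simp [Fin.snocEquiv]
    rw [he]
    exact peel_point2 L rest
  calc (∑' rest : Fin N → ℕ, _) ≤ ∑' rest : Fin N → ℕ,
        (if 1 ≤ L then (((L:ℝ≥0∞))⁻¹ * ((L:ℝ≥0∞))⁻¹) *
          (if StrictMono rest ∧ ∀ i, 0 < rest i ∧ rest i ≤ L - 1
            then ∏ i, ((rest i:ℝ≥0∞))⁻¹ else 0) else 0) :=
      ENNReal.tsum_le_tsum step1
    _ ≤ (if 1 ≤ L then ((L:ℝ≥0∞))⁻¹ * ((L:ℝ≥0∞))⁻¹ *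
          ENNReal.ofReal (H (L-1) ^ N / N.factorial) else 0) := by
        by_cases hL : 1 ≤ L
        · have hcg : ∀ rest : Fin N → ℕ, (if 1 ≤ L then (((L:ℝ≥0∞))⁻¹ * ((L:ℝ≥0∞))⁻¹) *
              (if StrictMono rest ∧ ∀ i, 0 < rest i ∧ rest i ≤ L - 1
                then ∏ i, ((rest i:ℝ≥0∞))⁻¹ else 0) else 0)
              = (((L:ℝ≥0∞))⁻¹ * ((L:ℝ≥0∞))⁻¹) *
              (if StrictMono rest ∧ ∀ i, 0 < rest i ∧ rest i ≤ L - 1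
                then ∏ i, ((rest i:ℝ≥0∞))⁻¹ else 0) := fun rest => if_pos hL
          rw [tsum_congr hcg, ENNReal.tsum_mul_left, if_pos hL]
          exact mul_le_mul_right (Qbound N (L-1)) _
        · have hcg : ∀ rest : Fin N → ℕ, (if 1 ≤ L then (((L:ℝ≥0∞))⁻¹ * ((L:ℝ≥0∞))⁻¹) *
              (if StrictMono rest ∧ ∀ i, 0 < rest i ∧ rest i ≤ L - 1
                then ∏ i, ((rest i:ℝ≥0∞))⁻¹ else 0) else 0) = 0 := fun rest => if_neg hL
          rw [tsum_congr hcg, if_neg hL, tsum_zero]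

lemma H_le_log {L : ℕ} (hL : 1 ≤ L) : H (L-1) ≤ 1 + Real.log L := by
  have h1 : H (L-1) ≤ 1 + Real.log ((L-1 : ℕ) : ℝ) := by
    have := harmonic_le_one_add_log (L-1)
    unfold H
    exact_mod_cast this
  have hlog : Real.log ((L-1:ℕ):ℝ) ≤ Real.log (L:ℝ) := by
    rcases Nat.eq_zero_or_pos (L-1) with h|h
    · rw [h]
      simpa using Real.log_nonneg (by exact_mod_cast hL)
    · exact Real.log_le_log (by exact_mod_cast h) (by exact_mod_cast Nat.sub_le L 1)
  linarith

lemma tail_ne_top {y' : ℝ} (hy0 : 0 ≤ y') (hy : y' < 1/4) :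
    (∑' N : ℕ, (ENNReal.ofReal (4*y'))^N * MS N) ≠ ⊤ := by
  set p : ℝ := 4*y' - 2 with hp
  have hp1 : p < -1 := by rw [hp]; linarith
  set E : ℝ := Real.exp (4*y') with hE
  have hE0 : 0 ≤ E := Real.exp_nonneg _
  -- bound the inner sum over N for fixed L ≥ 1
  have inner : ∀ L : ℕ, 1 ≤ L →
      (∑' N : ℕ, (ENNReal.ofReal (4*y'))^N * ENNReal.ofReal (H (L-1) ^ N / N.factorial))
        ≤ ENNReal.ofReal (E * (L:ℝ)^((4*y' : ℝ))) := by
    intro L hL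
    have hHn := H_nonneg (L-1)
    have hcg : ∀ N : ℕ, (ENNReal.ofReal (4*y'))^N *
        ENNReal.ofReal (H (L-1) ^ N / N.factorial)
        = ENNReal.ofReal ((4*y'*H (L-1))^N / N.factorial) := by
      intro N
      rw [← ENNReal.ofReal_pow (by linarith), ← ENNReal.ofReal_mul (by positivity)]
      congr 1
      rw [mul_pow]
      ring
    rw [tsum_congr hcg,
      ← ENNReal.ofReal_tsum_of_nonneg (fun N => by positivity)
        (Real.summable_pow_div_factorial _)]
    apply ENNReal.ofReal_le_ofReal
    have hexp : (∑' N : ℕ, (4*y'*H (L-1))^N / N.factorial) = Real.exp (4*y'*H (L-1)) := by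
      rw [Real.exp_eq_exp_ℝ, NormedSpace.exp_eq_tsum_div]
    rw [hexp]
    have hLpos : (0:ℝ) < L := by exact_mod_cast hL
    calc Real.exp (4*y'*H (L-1)) ≤ Real.exp (4*y'*(1 + Real.log L)) := by
          apply Real.exp_le_exp.mpr
          apply mul_le_mul_of_nonneg_left (H_le_log hL) (by linarith)
      _ = E * (L:ℝ)^((4*y':ℝ)) := by
          rw [Real.rpow_def_of_pos hLpos, hE, ← Real.exp_add]
          congr 1
          ring
  -- rearrange the double sum
  have hswap : (∑' N : ℕ, (ENNReal.ofReal (4*y'))^N * MS N)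
      = ∑' L : ℕ, ∑' N : ℕ, (ENNReal.ofReal (4*y'))^N *
          (if 1 ≤ L then ((L:ℝ≥0∞))⁻¹ * ((L:ℝ≥0∞))⁻¹ *
            ENNReal.ofReal (H (L-1) ^ N / N.factorial) else 0) := by
    rw [← ENNReal.tsum_comm]
    exact tsum_congr fun N => ENNReal.tsum_mul_left.symm
  rw [hswap]
  -- bound each L-term
  have hterm : ∀ L : ℕ,
      (∑' N : ℕ, (ENNReal.ofReal (4*y'))^N *
        (if 1 ≤ L then ((L:ℝ≥0∞))⁻¹ * ((L:ℝ≥0∞))⁻¹ *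
          ENNReal.ofReal (H (L-1) ^ N / N.factorial) else 0))
      ≤ ENNReal.ofReal E * ENNReal.ofReal ((L:ℝ)^p) := by
    intro L
    by_cases hL : 1 ≤ L
    · have hLpos : (0:ℝ) < L := by exact_mod_cast hL
      have hcg : ∀ N : ℕ, (ENNReal.ofReal (4*y'))^N *
          (if 1 ≤ L then ((L:ℝ≥0∞))⁻¹ * ((L:ℝ≥0∞))⁻¹ *
            ENNReal.ofReal (H (L-1) ^ N / N.factorial) else 0)
          = (((L:ℝ≥0∞))⁻¹ * ((L:ℝ≥0∞))⁻¹) *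
            ((ENNReal.ofReal (4*y'))^N * ENNReal.ofReal (H (L-1) ^ N / N.factorial)) := by
        intro N
        rw [if_pos hL]
        ring
      rw [tsum_congr hcg, ENNReal.tsum_mul_left]
      calc (((L:ℝ≥0∞))⁻¹ * ((L:ℝ≥0∞))⁻¹) *
            (∑' N : ℕ, (ENNReal.ofReal (4*y'))^N *
              ENNReal.ofReal (H (L-1) ^ N / N.factorial))
          ≤ (((L:ℝ≥0∞))⁻¹ * ((L:ℝ≥0∞))⁻¹) * ENNReal.ofReal (E * (L:ℝ)^((4*y':ℝ))) :=
            mul_le_mul_right (inner L hL) _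
        _ = ENNReal.ofReal E * ENNReal.ofReal ((L:ℝ)^p) := by
            have hinv : ((L:ℝ≥0∞))⁻¹ = ENNReal.ofReal ((L:ℝ)⁻¹) := by
              rw [← ENNReal.ofReal_natCast L, ← ENNReal.ofReal_inv_of_pos hLpos]
            rw [hinv, ← ENNReal.ofReal_mul (by positivity),
              ← ENNReal.ofReal_mul (by positivity), ← ENNReal.ofReal_mul hE0]
            congr 1
            have hr : (L:ℝ)^p = (L:ℝ)^((4*y':ℝ)) * ((L:ℝ)*(L:ℝ))⁻¹ := by
              rw [show p = (4*y':ℝ) + (-2) by rw [hp]; ring, Real.rpow_add hLpos,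
                Real.rpow_neg (le_of_lt hLpos), show ((2:ℝ)) = ((2:ℕ):ℝ) by norm_num,
                Real.rpow_natCast, pow_two]
            rw [hr]
            have hLne : (L:ℝ) ≠ 0 := ne_of_gt hLpos
            field_simp
    · have hcg : ∀ N : ℕ, (ENNReal.ofReal (4*y'))^N *
          (if 1 ≤ L then ((L:ℝ≥0∞))⁻¹ * ((L:ℝ≥0∞))⁻¹ *
            ENNReal.ofReal (H (L-1) ^ N / N.factorial) else 0) = 0 := by
        intro N
        rw [if_neg hL, mul_zero]
      rw [tsum_congr hcg, tsum_zero]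
      exact zero_le
  have hsum : (∑' L : ℕ, ENNReal.ofReal E * ENNReal.ofReal ((L:ℝ)^p)) ≠ ⊤ := by
    rw [ENNReal.tsum_mul_left,
      ← ENNReal.ofReal_tsum_of_nonneg (fun L => Real.rpow_nonneg (Nat.cast_nonneg L) p)
        (Real.summable_nat_rpow.mpr hp1)]
    exact ENNReal.mul_ne_top ENNReal.ofReal_ne_top ENNReal.ofReal_ne_top
  exact ne_top_of_le_ne_top hsum (ENNReal.tsum_le_tsum hterm)

end Phi0Aux
namespace Phi0Aux

def gE (k n s : ℕ) (q : (Fin n → ℕ) × (Fin n → ℕ)) : ℝ≥0∞ :=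
  if IdxCond0 k n s q.1 ∧ athCond n q.2 then ∏ i, (((q.2 i : ℝ≥0∞)) ^ q.1 i)⁻¹ else 0

def UU (X Y Z : ℝ≥0∞) (p : ℕ × ℕ × ℕ) : ℝ≥0∞ :=
  if 1 ≤ p.1 ∧ 1 ≤ p.2.1 ∧ 1 ≤ p.2.2 then
    2^p.2.1 * X^(p.1 - p.2.1 - p.2.2) * Y^(p.2.1 - p.2.2) * Z^(2*(p.2.2 - 1)) *
      ∑' q : (Fin p.2.1 → ℕ) × (Fin p.2.1 → ℕ), gE p.1 p.2.1 p.2.2 q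
  else 0

def BB (X Y : ℝ≥0∞) (n : ℕ) (q : (Fin n → ℕ) × (Fin n → ℕ)) : ℝ≥0∞ :=
  if (∀ i, 1 ≤ q.1 i) ∧ (∀ h : 0 < n, 2 ≤ q.1 ⟨n-1, Nat.sub_lt h Nat.one_pos⟩)
      ∧ athCond n q.2
  then 2^n * X⁻¹ * Y^(n-1) * ∏ i, WW X (q.1 i) (q.2 i) else 0

lemma idx_facts {k n s : ℕ} {κ : Fin n → ℕ} (h : IdxCond k n s κ) :
    n + s ≤ k ∧ s ≤ n := by
  obtain ⟨h1, h2, h3⟩ := h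
  have hsn : s ≤ n := by
    rw [← h3]
    calc (Finset.univ.filter fun i => 2 ≤ κ i).card ≤ Finset.univ.card :=
          Finset.card_filter_le _ _
      _ = n := by simp
  constructor
  · have hsplit := Finset.sum_filter_add_sum_filter_not Finset.univ
      (fun i => 2 ≤ κ i) κ
    have hA : 2 * s ≤ ∑ i ∈ Finset.univ.filter (fun i => 2 ≤ κ i), κ i := by
      calc 2 * s = ∑ _i ∈ Finset.univ.filter (fun i => 2 ≤ κ i), 2 := by
            rw [Finset.sum_const, h3, smul_eq_mul, mul_comm]
        _ ≤ _ := Finset.sum_le_sum fun i hi => (Finset.mem_filter.mp hi).2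
    have hB : n - s ≤ ∑ i ∈ Finset.univ.filter (fun i => ¬ 2 ≤ κ i), κ i := by
      have hcard : (Finset.univ.filter (fun i => ¬ 2 ≤ κ i)).card = n - s := by
        have := Finset.card_filter_add_card_filter_not
          (s := (Finset.univ : Finset (Fin n))) (p := fun i => 2 ≤ κ i)
        simp only [Finset.card_univ, Fintype.card_fin] at this
        omega
      calc n - s = ∑ _i ∈ Finset.univ.filter (fun i => ¬ 2 ≤ κ i), 1 := by
            rw [Finset.sum_const, hcard, smul_eq_mul, mul_one]
        _ ≤ _ := Finset.sum_le_sum fun i _ => h1 i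
    omega
  · exact hsn

lemma sum_shift {n k : ℕ} {κ : Fin n → ℕ} (h1 : ∀ i, 1 ≤ κ i) (hk : ∑ i, κ i = k) :
    ∑ i, (κ i - 1) = k - n := by
  have hh : ∑ i, ((κ i - 1) + 1) = k := by
    rw [← hk]
    exact Finset.sum_congr rfl fun i _ => by have := h1 i; omega
  rw [Finset.sum_add_distrib, Finset.sum_const, Finset.card_univ, Fintype.card_fin,
    smul_eq_mul, mul_one] at hh
  omega

section core
variable {X Y Z : ℝ≥0∞}

lemma core_ineq (hX0 : X ≠ 0) (hXt : X ≠ ⊤) (hZ : Z^2 ≤ X*Y)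
    {k n s : ℕ} {κ m : Fin n → ℕ} (hIdx : IdxCond0 k n s κ) (hs : 1 ≤ s) :
    X^(k-n-s) * Y^(n-s) * Z^(2*(s-1)) * ∏ i, (((m i:ℝ≥0∞)) ^ κ i)⁻¹
      ≤ X⁻¹ * Y^(n-1) * ∏ i, WW X (κ i) (m i) := by
  obtain ⟨hI, hlast⟩ := hIdx
  obtain ⟨hnk, hsn⟩ := idx_facts hI
  have hprod : ∏ i, WW X (κ i) (m i)
      = X^(k-n) * ∏ i, (((m i:ℝ≥0∞)) ^ κ i)⁻¹ := by
    unfold WW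
    rw [Finset.prod_mul_distrib, Finset.prod_pow_eq_pow_sum, sum_shift hI.1 hI.2.1]
  rw [hprod]
  have hZs : Z^(2*(s-1)) ≤ (X*Y)^(s-1) := by
    rw [pow_mul]
    exact pow_le_pow_left' hZ _
  calc X^(k-n-s) * Y^(n-s) * Z^(2*(s-1)) * ∏ i, (((m i:ℝ≥0∞)) ^ κ i)⁻¹
      ≤ X^(k-n-s) * Y^(n-s) * (X*Y)^(s-1) * ∏ i, (((m i:ℝ≥0∞)) ^ κ i)⁻¹ := by
        exact mul_le_mul_left (mul_le_mul_right hZs _) _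
    _ = (X^(k-n-s) * X^(s-1)) * (Y^(n-s) * Y^(s-1)) * ∏ i, (((m i:ℝ≥0∞)) ^ κ i)⁻¹ := by
        rw [mul_pow]
        ring
    _ = X^(k-n-1) * Y^(n-1) * ∏ i, (((m i:ℝ≥0∞)) ^ κ i)⁻¹ := by
        have e1 : (k-n-s)+(s-1) = k-n-1 := by omega
        have e2 : (n-s)+(s-1) = n-1 := by omega
        rw [← pow_add, ← pow_add, e1, e2]
    _ = X⁻¹ * Y^(n-1) * (X^(k-n) * ∏ i, (((m i:ℝ≥0∞)) ^ κ i)⁻¹) := by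
        have he : X^(k-n) = X^(k-n-1) * X := by
          rw [← pow_succ]
          congr 1
          omega
        rw [he]
        calc X^(k-n-1) * Y^(n-1) * ∏ i, (((m i:ℝ≥0∞)) ^ κ i)⁻¹
            = (X⁻¹ * X) * (X^(k-n-1) * Y^(n-1) * ∏ i, (((m i:ℝ≥0∞)) ^ κ i)⁻¹) := by
              rw [ENNReal.inv_mul_cancel hX0 hXt, one_mul]
          _ = X⁻¹ * Y^(n-1) * (X^(k-n-1) * X * ∏ i, (((m i:ℝ≥0∞)) ^ κ i)⁻¹) := by
              ring

lemma L2 (hX0 : X ≠ 0) (hXt : X ≠ ⊤) (hZ : Z^2 ≤ X*Y) (k n s : ℕ) :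
    UU X Y Z (k,(n,s)) ≤ ∑' q : (Fin n → ℕ) × (Fin n → ℕ),
      (if k = ∑ i, q.1 i then
        if s = (Finset.univ.filter fun i => 2 ≤ q.1 i).card then BB X Y n q else 0
       else 0) := by
  unfold UU
  by_cases hflag : 1 ≤ k ∧ 1 ≤ n ∧ 1 ≤ s
  · rw [if_pos hflag, ← ENNReal.tsum_mul_left]
    refine ENNReal.tsum_le_tsum fun q => ?_
    unfold gE
    by_cases hq : IdxCond0 k n s q.1 ∧ athCond n q.2
    · rw [if_pos hq]
      have hkq : k = ∑ i, q.1 i := hq.1.1.2.1.symm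
      have hsq : s = (Finset.univ.filter fun i => 2 ≤ q.1 i).card := hq.1.1.2.2.symm
      rw [if_pos hkq, if_pos hsq]
      unfold BB
      rw [if_pos ⟨hq.1.1.1, fun h => hq.1.2 h, hq.2⟩]
      have hcore := core_ineq hX0 hXt hZ (m := q.2) hq.1 hflag.2.2
      calc (2:ℝ≥0∞)^n * X^(k-n-s) * Y^(n-s) * Z^(2*(s-1)) *
            ∏ i, (((q.2 i:ℝ≥0∞)) ^ q.1 i)⁻¹
          = 2^n * (X^(k-n-s) * Y^(n-s) * Z^(2*(s-1)) *
            ∏ i, (((q.2 i:ℝ≥0∞)) ^ q.1 i)⁻¹) := by ring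
        _ ≤ 2^n * (X⁻¹ * Y^(n-1) * ∏ i, WW X (q.1 i) (q.2 i)) :=
            mul_le_mul_right hcore _
        _ = 2^n * X⁻¹ * Y^(n-1) * ∏ i, WW X (q.1 i) (q.2 i) := by ring
    · rw [if_neg hq, mul_zero]
      exact zero_le
  · rw [if_neg hflag]
    exact zero_le

end core

lemma sum_ks {α : Type*} (F Gc : α → ℕ) (v : α → ℝ≥0∞) :
    (∑' k : ℕ, ∑' s : ℕ, ∑' q : α,
      (if k = F q then if s = Gc q then v q else 0 else 0))
      = ∑' q : α, v q := by
  have h1 : ∀ k : ℕ, (∑' s : ℕ, ∑' q : α,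
      (if k = F q then if s = Gc q then v q else 0 else 0))
      = ∑' q : α, (if k = F q then v q else 0) := by
    intro k
    rw [ENNReal.tsum_comm]
    refine tsum_congr fun q => ?_
    by_cases hk : k = F q
    · simp only [if_pos hk]
      exact tsum_ite_eq (Gc q) (fun _ => v q)
    · simp [if_neg hk]
  rw [tsum_congr h1, ENNReal.tsum_comm]
  exact tsum_congr fun q => tsum_ite_eq (F q) (fun _ => v q)

lemma D2_bound {X Y : ℝ≥0∞} (hX : X ≤ 1/2) (N : ℕ) :
    (∑' q : (Fin (N+1) → ℕ) × (Fin (N+1) → ℕ), BB X Y (N+1) q)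
      ≤ 4^(N+1) * X⁻¹ * Y^N * MS N := by
  have hL : (⟨N+1-1, Nat.sub_lt (Nat.succ_pos N) Nat.one_pos⟩ : Fin (N+1)) = Fin.last N := rfl
  rw [ENNReal.tsum_prod', ENNReal.tsum_comm]
  have key : ∀ m : Fin (N+1) → ℕ,
      (∑' κ : Fin (N+1) → ℕ, BB X Y (N+1) (κ, m))
      ≤ (2^(N+1) * X⁻¹ * Y^N * 2^(N+1)) *
        (if StrictMono m ∧ ∀ i, 0 < m i
          then (∏ i, ((m i : ℝ≥0∞))⁻¹) * ((m (Fin.last N) : ℝ≥0∞))⁻¹ else 0) := by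
    intro m
    by_cases hath : athCond (N+1) m
    · have hm : ∀ i, 1 ≤ m i := fun i => (hath.2 i).2
      have hcg : ∀ κ : Fin (N+1) → ℕ, BB X Y (N+1) (κ, m)
          = (2^(N+1) * X⁻¹ * Y^N) *
            (if ((∀ i, 1 ≤ κ i) ∧ 2 ≤ κ ⟨N+1-1, Nat.sub_lt (Nat.succ_pos N) Nat.one_pos⟩)
              then ∏ i, WW X (κ i) (m i) else 0) := by
        intro κ
        unfold BB
        by_cases hκ : (∀ i, 1 ≤ κ i) ∧ 2 ≤ κ ⟨N+1-1, Nat.sub_lt (Nat.succ_pos N) Nat.one_pos⟩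
        · rw [if_pos ⟨hκ.1, fun _ => hκ.2, hath⟩, if_pos hκ]
          rfl
        · rw [if_neg, if_neg hκ, mul_zero]
          rintro ⟨hc1, hc2, -⟩
          exact hκ ⟨hc1, hc2 (Nat.succ_pos N)⟩
      rw [tsum_congr hcg, ENNReal.tsum_mul_left,
        if_pos ⟨hath.1, fun i => (hath.2 i).2⟩]
      rw [mul_assoc (2^(N+1) * X⁻¹ * Y^N)]
      apply mul_le_mul_right
      calc (∑' κ : Fin (N+1) → ℕ,
            if ((∀ i, 1 ≤ κ i) ∧ 2 ≤ κ ⟨N+1-1, Nat.sub_lt (Nat.succ_pos N) Nat.one_pos⟩)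
              then ∏ i, WW X (κ i) (m i) else 0)
          ≤ 2^(N+1) * (∏ i, ((m i : ℝ≥0∞))⁻¹) *
            ((m ⟨N+1-1, Nat.sub_lt (Nat.succ_pos N) Nat.one_pos⟩ : ℝ≥0∞))⁻¹ :=
            kappa_sum hX (Nat.succ_pos N) m hm
        _ = 2^(N+1) * ((∏ i, ((m i : ℝ≥0∞))⁻¹) * ((m (Fin.last N) : ℝ≥0∞))⁻¹) := by
            rw [hL, mul_assoc]
    · have hcg : ∀ κ : Fin (N+1) → ℕ, BB X Y (N+1) (κ, m) = 0 := by
        intro κ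
        unfold BB
        rw [if_neg]
        rintro ⟨-, -, hc⟩
        exact hath hc
      rw [tsum_congr hcg, tsum_zero]
      exact zero_le
  calc (∑' (m : Fin (N+1) → ℕ) (κ : Fin (N+1) → ℕ), BB X Y (N+1) (κ, m))
      ≤ ∑' m : Fin (N+1) → ℕ, (2^(N+1) * X⁻¹ * Y^N * 2^(N+1)) *
        (if StrictMono m ∧ ∀ i, 0 < m i
          then (∏ i, ((m i : ℝ≥0∞))⁻¹) * ((m (Fin.last N) : ℝ≥0∞))⁻¹ else 0) :=
        ENNReal.tsum_le_tsum key
    _ = (2^(N+1) * X⁻¹ * Y^N * 2^(N+1)) * ∑' m : Fin (N+1) → ℕ,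
        (if StrictMono m ∧ ∀ i, 0 < m i
          then (∏ i, ((m i : ℝ≥0∞))⁻¹) * ((m (Fin.last N) : ℝ≥0∞))⁻¹ else 0) :=
        ENNReal.tsum_mul_left
    _ ≤ (2^(N+1) * X⁻¹ * Y^N * 2^(N+1)) * MS N := mul_le_mul_right (m_sum_bound N) _
    _ = 4^(N+1) * X⁻¹ * Y^N * MS N := by
        have h4 : (2:ℝ≥0∞)^(N+1) * 2^(N+1) = 4^(N+1) := by
          rw [← mul_pow]
          norm_num
        calc (2^(N+1) * X⁻¹ * Y^N * 2^(N+1)) * MS N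
            = (2^(N+1) * 2^(N+1)) * X⁻¹ * Y^N * MS N := by ring
          _ = 4^(N+1) * X⁻¹ * Y^N * MS N := by rw [h4]

lemma master {x' y' : ℝ} {Z : ℝ≥0∞} (hx1 : ENNReal.ofReal x' ≤ 1/2)
    (hx0 : ENNReal.ofReal x' ≠ 0) (hy0 : 0 ≤ y') (hy : y' < 1/4)
    (hZ : Z^2 ≤ ENNReal.ofReal x' * ENNReal.ofReal y') :
    (∑' p : ℕ × ℕ × ℕ, UU (ENNReal.ofReal x') (ENNReal.ofReal y') Z p) ≠ ⊤ := by
  set X := ENNReal.ofReal x' with hXdef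
  set Y := ENNReal.ofReal y' with hYdef
  have hXt : X ≠ ⊤ := ENNReal.ofReal_ne_top
  have step1 : (∑' p : ℕ × ℕ × ℕ, UU X Y Z p)
      ≤ ∑' n : ℕ, ∑' q : (Fin n → ℕ) × (Fin n → ℕ), BB X Y n q := by
    calc (∑' p : ℕ × ℕ × ℕ, UU X Y Z p)
        = ∑' (k : ℕ) (n : ℕ) (s : ℕ), UU X Y Z (k,(n,s)) := by
          rw [ENNReal.tsum_prod']
          exact tsum_congr fun k => ENNReal.tsum_prod'
      _ = ∑' (n : ℕ) (k : ℕ) (s : ℕ), UU X Y Z (k,(n,s)) := ENNReal.tsum_comm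
      _ ≤ ∑' (n : ℕ) (k : ℕ) (s : ℕ), ∑' q : (Fin n → ℕ) × (Fin n → ℕ),
            (if k = ∑ i, q.1 i then
              if s = (Finset.univ.filter fun i => 2 ≤ q.1 i).card then BB X Y n q else 0
             else 0) :=
          ENNReal.tsum_le_tsum fun n => ENNReal.tsum_le_tsum fun k =>
            ENNReal.tsum_le_tsum fun s => L2 hx0 hXt hZ k n s
      _ = ∑' n : ℕ, ∑' q : (Fin n → ℕ) × (Fin n → ℕ), BB X Y n q :=
          tsum_congr fun n => sum_ks _ _ _
  have hzero : (∑' q : (Fin 0 → ℕ) × (Fin 0 → ℕ), BB X Y 0 q) ≤ X⁻¹ := by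
    haveI : Subsingleton ((Fin 0 → ℕ) × (Fin 0 → ℕ)) :=
      ⟨fun a b => Prod.ext (funext fun i => i.elim0) (funext fun i => i.elim0)⟩
    rw [tsum_eq_single default (fun b hb => (hb (Subsingleton.elim _ _)).elim)]
    unfold BB
    split_ifs with h
    · apply le_of_eq
      simp
    · exact zero_le
  have step2 : (∑' n : ℕ, ∑' q : (Fin n → ℕ) × (Fin n → ℕ), BB X Y n q) ≠ ⊤ := by
    rw [tsum_eq_zero_add' ENNReal.summable]
    apply ENNReal.add_ne_top.mpr
    constructor
    · exact ne_top_of_le_ne_top (ENNReal.inv_ne_top.mpr hx0) hzero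
    · have hb : (∑' N : ℕ, ∑' q : (Fin (N+1) → ℕ) × (Fin (N+1) → ℕ), BB X Y (N+1) q)
          ≤ (4 * X⁻¹) * ∑' N : ℕ, (ENNReal.ofReal (4*y'))^N * MS N := by
        calc (∑' N : ℕ, ∑' q : (Fin (N+1) → ℕ) × (Fin (N+1) → ℕ), BB X Y (N+1) q)
            ≤ ∑' N : ℕ, 4^(N+1) * X⁻¹ * Y^N * MS N :=
              ENNReal.tsum_le_tsum fun N => D2_bound hx1 N
          _ = ∑' N : ℕ, (4 * X⁻¹) * ((ENNReal.ofReal (4*y'))^N * MS N) := by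
              refine tsum_congr fun N => ?_
              have h4Y : ENNReal.ofReal (4*y') = 4 * Y := by
                rw [ENNReal.ofReal_mul (by norm_num), hYdef]
                norm_num
              rw [h4Y, mul_pow, pow_succ]
              ring
          _ = (4 * X⁻¹) * ∑' N : ℕ, (ENNReal.ofReal (4*y'))^N * MS N :=
              ENNReal.tsum_mul_left
      apply ne_top_of_le_ne_top _ hb
      exact ENNReal.mul_ne_top
        (ENNReal.mul_ne_top (by norm_num) (ENNReal.inv_ne_top.mpr hx0))
        (tail_ne_top hy0 hy)
  exact ne_top_of_le_ne_top step2 step1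

end Phi0Aux
namespace Phi0Aux

lemma gE_ne_top (k n s : ℕ) (q : (Fin n → ℕ) × (Fin n → ℕ)) : gE k n s q ≠ ⊤ := by
  unfold gE
  split_ifs with h
  · refine (ENNReal.prod_lt_top fun i _ => ?_).ne
    rw [lt_top_iff_ne_top]
    exact ENNReal.inv_ne_top.mpr (pow_ne_zero _ (m_ne_zero (h.2.2 i).2))
  · exact ENNReal.zero_ne_top

lemma gE_toReal (k n s : ℕ) (q : (Fin n → ℕ) × (Fin n → ℕ)) : (gE k n s q).toReal
    = if IdxCond0 k n s q.1 ∧ athCond n q.2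
      then ∏ i, (((q.2 i : ℝ)) ^ q.1 i)⁻¹ else 0 := by
  unfold gE
  split_ifs with h
  · rw [ENNReal.toReal_prod]
    exact Finset.prod_congr rfl fun i _ => by
      rw [ENNReal.toReal_inv, ENNReal.toReal_pow, ENNReal.toReal_natCast]
  · simp

lemma term_bound (x y z : ℂ) (hx0 : x ≠ 0) (hy0 : y ≠ 0)
    (hUU : ∀ p : ℕ × ℕ × ℕ,
      UU (ENNReal.ofReal ‖x‖) (ENNReal.ofReal ‖y‖) (ENNReal.ofReal ‖z‖) p ≠ ⊤)
    (p : ℕ × ℕ × ℕ) (t : ℂ) (ht : ‖t‖ ≤ 1) :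
    ‖Phi0Term x y z p t‖
      ≤ (UU (ENNReal.ofReal ‖x‖) (ENNReal.ofReal ‖y‖) (ENNReal.ofReal ‖z‖) p).toReal := by
  obtain ⟨k, n, s⟩ := p
  set X := ENNReal.ofReal ‖x‖ with hXdef
  set Y := ENNReal.ofReal ‖y‖ with hYdef
  set Z := ENNReal.ofReal ‖z‖ with hZdef
  unfold Phi0Term
  by_cases hflag : 1 ≤ k ∧ 1 ≤ n ∧ 1 ≤ s
  swap
  · rw [if_neg hflag]
    simpa using ENNReal.toReal_nonneg
  rw [if_pos hflag]
  by_cases hzs : z = 0 ∧ 2 ≤ s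
  · have hne : (2*(s-1)) ≠ 0 := by omega
    rw [hzs.1, zero_pow hne, mul_zero]
    simpa using ENNReal.toReal_nonneg
  -- main case
  have hX0 : X ≠ 0 := by
    rw [hXdef]
    exact (ENNReal.ofReal_pos.mpr (norm_pos_iff.mpr hx0)).ne'
  have hY0 : Y ≠ 0 := by
    rw [hYdef]
    exact (ENNReal.ofReal_pos.mpr (norm_pos_iff.mpr hy0)).ne'
  have hZc : Z^(2*(s-1)) ≠ 0 := by
    by_cases hs1 : s = 1
    · rw [hs1]
      norm_num
    · have hz : z ≠ 0 := fun hzz => hzs ⟨hzz, by omega⟩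
      exact pow_ne_zero _ (by
        rw [hZdef]
        exact (ENNReal.ofReal_pos.mpr (norm_pos_iff.mpr hz)).ne')
  set A : ℝ≥0∞ := ∑' q : (Fin n → ℕ) × (Fin n → ℕ), gE k n s q with hAdef
  have hAne : A ≠ ⊤ := by
    intro hAt
    apply hUU (k, n, s)
    show UU X Y Z (k, n, s) = ⊤
    unfold UU
    rw [if_pos hflag]
    show 2^n * X^(k-n-s) * Y^(n-s) * Z^(2*(s-1)) * A = ⊤
    rw [hAt, ENNReal.mul_top]
    refine mul_ne_zero (mul_ne_zero (mul_ne_zero ?_ ?_) ?_) hZc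
    · positivity
    · exact pow_ne_zero _ hX0
    · exact pow_ne_zero _ hY0
  set g' : (Fin n → ℕ) × (Fin n → ℕ) → ℝ := fun q => (gE k n s q).toReal with hg'
  have hg'nn : ∀ q, 0 ≤ g' q := fun q => ENNReal.toReal_nonneg
  have hg'sum : Summable g' := ENNReal.summable_toReal hAne
  have hg'tsum : ∑' q, g' q = A.toReal := (ENNReal.tsum_toReal_eq (gE_ne_top k n s)).symm
  have hslices := (summable_prod_of_nonneg hg'nn).mp hg'sum
  have hAth : ∀ κ : Fin n → ℕ, IdxCond0 k n s κ → ‖Ath κ t‖ ≤ ∑' m, g' (κ, m) := by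
    intro κ hκ
    unfold Ath
    have hpoint : ∀ m : Fin n → ℕ,
        ‖(if athCond n m then t ^ lastExp m / ∏ i, ((m i : ℂ) ^ κ i) else 0)‖
          ≤ g' (κ, m) := by
      intro m
      by_cases hm : athCond n m
      · rw [if_pos hm, hg']
        show _ ≤ (gE k n s (κ, m)).toReal
        rw [gE_toReal, if_pos ⟨hκ, hm⟩]
        have hnormprod : ‖∏ i, ((m i : ℂ) ^ κ i)‖ = ∏ i, ((m i : ℝ) ^ κ i) := by
          rw [norm_prod]
          exact Finset.prod_congr rfl fun i _ => by
            rw [norm_pow, Complex.norm_natCast]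
        rw [norm_div, hnormprod, norm_pow, Finset.prod_inv_distrib, div_eq_mul_inv]
        have ht1 : ‖t‖ ^ lastExp m ≤ 1 := pow_le_one₀ (norm_nonneg t) ht
        exact mul_le_of_le_one_left (by positivity) ht1
      · rw [if_neg hm]
        simpa using hg'nn (κ, m)
    calc ‖∑' m : Fin n → ℕ,
          (if athCond n m then t ^ lastExp m / ∏ i, ((m i : ℂ) ^ κ i) else 0)‖
        ≤ ∑' m : Fin n → ℕ,
          ‖(if athCond n m then t ^ lastExp m / ∏ i, ((m i : ℂ) ^ κ i) else 0)‖ :=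
          norm_tsum_le' _
      _ ≤ ∑' m, g' (κ, m) := Summable.tsum_le_tsum hpoint
          (Summable.of_nonneg_of_le (fun m => norm_nonneg _) hpoint (hslices.1 κ))
          (hslices.1 κ)
  have hG0 : ‖G0 k n s t‖ ≤ 2^n * A.toReal := by
    unfold G0
    rw [norm_mul]
    have h2n : ‖(2:ℂ)^n‖ = 2^n := by
      rw [norm_pow]
      norm_num
    rw [h2n]
    apply mul_le_mul_of_nonneg_left _ (by positivity)
    have hpoint : ∀ κ : Fin n → ℕ,
        ‖(if IdxCond0 k n s κ then Ath κ t else 0)‖ ≤ ∑' m, g' (κ, m) := by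
      intro κ
      by_cases hκ : IdxCond0 k n s κ
      · rw [if_pos hκ]
        exact hAth κ hκ
      · rw [if_neg hκ]
        simpa using tsum_nonneg (fun m => hg'nn (κ, m))
    calc ‖∑' κ : Fin n → ℕ, (if IdxCond0 k n s κ then Ath κ t else 0)‖
        ≤ ∑' κ : Fin n → ℕ, ‖(if IdxCond0 k n s κ then Ath κ t else 0)‖ :=
          norm_tsum_le' _
      _ ≤ ∑' κ : Fin n → ℕ, ∑' m, g' (κ, m) := Summable.tsum_le_tsum hpoint
          (Summable.of_nonneg_of_le (fun κ => norm_nonneg _) hpoint hslices.2)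
          hslices.2
      _ = ∑' q, g' q := (Summable.tsum_prod' hg'sum hslices.1).symm
      _ = A.toReal := hg'tsum
  have hUUval : (UU X Y Z (k, n, s)).toReal
      = 2^n * ‖x‖^(k-n-s) * ‖y‖^(n-s) * ‖z‖^(2*(s-1)) * A.toReal := by
    unfold UU
    rw [if_pos hflag]
    show (2^n * X^(k-n-s) * Y^(n-s) * Z^(2*(s-1)) * A).toReal = _
    rw [ENNReal.toReal_mul, ENNReal.toReal_mul, ENNReal.toReal_mul, ENNReal.toReal_mul,
      ENNReal.toReal_pow, ENNReal.toReal_pow, ENNReal.toReal_pow, ENNReal.toReal_pow,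
      hXdef, hYdef, hZdef, ENNReal.toReal_ofReal (norm_nonneg x),
      ENNReal.toReal_ofReal (norm_nonneg y), ENNReal.toReal_ofReal (norm_nonneg z)]
    norm_num
  rw [hUUval, norm_mul, norm_mul, norm_mul, norm_pow, norm_pow, norm_pow]
  calc ‖G0 k n s t‖ * ‖x‖^(k-n-s) * ‖y‖^(n-s) * ‖z‖^(2*(s-1))
      ≤ (2^n * A.toReal) * ‖x‖^(k-n-s) * ‖y‖^(n-s) * ‖z‖^(2*(s-1)) := by
        gcongr
    _ = 2^n * ‖x‖^(k-n-s) * ‖y‖^(n-s) * ‖z‖^(2*(s-1)) * A.toReal := by ring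

end Phi0Aux
/-- The series defining `Φ₀(x,y,z;t)` converges uniformly on the closed disk `|t| ≤ 1`. -/
theorem Phi0_unif_conv (x y z : ℂ) (hx : ‖x‖ < 1 / 2) (hy : ‖y‖ < 1 / 4)
    (hx0 : x ≠ 0) (hy0 : y ≠ 0) (hz : ‖z ^ 2‖ < ‖x * y‖) :
    TendstoUniformlyOn
      (fun (S : Finset (ℕ × ℕ × ℕ)) (t : ℂ) => ∑ p ∈ S, Phi0Term x y z p t)
      (fun t => Phi0 x y z t) atTop {t : ℂ | ‖t‖ ≤ 1} := by
  set X := ENNReal.ofReal ‖x‖ with hXdef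
  set Y := ENNReal.ofReal ‖y‖ with hYdef
  set Z := ENNReal.ofReal ‖z‖ with hZdef
  have hx1 : X ≤ 1/2 := by
    rw [show (1/2 : ℝ≥0∞) = ENNReal.ofReal (1/2) by
      rw [ENNReal.ofReal_div_of_pos (by norm_num), ENNReal.ofReal_one,
        ENNReal.ofReal_ofNat]]
    exact ENNReal.ofReal_le_ofReal hx.le
  have hX0 : X ≠ 0 := (ENNReal.ofReal_pos.mpr (norm_pos_iff.mpr hx0)).ne'
  have hZXY : Z^2 ≤ X * Y := by
    rw [hXdef, hYdef, hZdef, ← ENNReal.ofReal_mul (norm_nonneg x),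
      ← ENNReal.ofReal_pow (norm_nonneg z)]
    apply ENNReal.ofReal_le_ofReal
    calc ‖z‖^2 = ‖z^2‖ := (norm_pow z 2).symm
      _ ≤ ‖x * y‖ := hz.le
      _ = ‖x‖ * ‖y‖ := norm_mul x y
  have hM := Phi0Aux.master hx1 hX0 (norm_nonneg y) hy hZXY
  have hu : Summable (fun p : ℕ × ℕ × ℕ => (Phi0Aux.UU X Y Z p).toReal) :=
    ENNReal.summable_toReal hM
  have hUUne : ∀ p : ℕ × ℕ × ℕ, Phi0Aux.UU X Y Z p ≠ ⊤ :=
    fun p => ENNReal.ne_top_of_tsum_ne_top hM p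
  have hb := Phi0Aux.term_bound x y z hx0 hy0 hUUne
  exact tendstoUniformlyOn_tsum hu (fun p t ht => hb p t ht)

end
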